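/- For real α and θ, the maximum over γ, γ' of f₁ + f₂, where f₁ = (cos γ cos α + sin α cos θ cos γ' + sin α sin θ sin γ')² and f₂ = (cos γ cos α + sin α cos θ sin γ' + sin α sin θ cos γ')², assuming cos α ≥ 0, sin α ≥ 0, cos θ ≥ 0, sin θ ≥ 0, is attained at γ = 0, γ' = π/4, with maximal value 2·(cos α + sin α·(cos θ + sin θ)/√2)². -/

import Mathlib

set_option maxHeartbeats 1600000 in
/-- The optimization in Lemma 1 (Appendix A): with nonnegative `cos α, sin α, cos θ, sin θ`,
the maximum of `f₁ + f₂` over `γ, γ'` is attained at `γ = 0`, `γ' = π/4`, with maximal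
value `2(cos α + sin α (cos θ + sin θ)/√2)²`. -/
theorem fef_optimization_lemma (α θ : ℝ)
    (hca : 0 ≤ Real.cos α) (hsa : 0 ≤ Real.sin α)
    (hct : 0 ≤ Real.cos θ) (hst : 0 ≤ Real.sin θ) :
    (∀ γ γ' : ℝ,
      (Real.cos γ * Real.cos α + Real.sin α * Real.cos θ * Real.cos γ' +
          Real.sin α * Real.sin θ * Real.sin γ')^2 +
        (Real.cos γ * Real.cos α + Real.sin α * Real.cos θ * Real.sin γ' +
          Real.sin α * Real.sin θ * Real.cos γ')^2 ≤
      2 * (Real.cos α + Real.sin α * (Real.cos θ + Real.sin θ) / Real.sqrt 2)^2) ∧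
    (Real.cos 0 * Real.cos α + Real.sin α * Real.cos θ * Real.cos (Real.pi / 4) +
        Real.sin α * Real.sin θ * Real.sin (Real.pi / 4))^2 +
      (Real.cos 0 * Real.cos α + Real.sin α * Real.cos θ * Real.sin (Real.pi / 4) +
        Real.sin α * Real.sin θ * Real.cos (Real.pi / 4))^2 =
      2 * (Real.cos α + Real.sin α * (Real.cos θ + Real.sin θ) / Real.sqrt 2)^2 := by
  have hs2 : Real.sqrt 2 ^ 2 = 2 := Real.sq_sqrt (by norm_num)
  have hs2pos : (0:ℝ) < Real.sqrt 2 := Real.sqrt_pos.mpr (by norm_num)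
  set a := Real.cos α
  set s := Real.sin α
  set c := Real.cos θ
  set t := Real.sin θ
  have hct1 : c ^ 2 + t ^ 2 = 1 := by
    have := Real.sin_sq_add_cos_sq θ; linarith
  have hR : 2 * (a + s * (c + t) / Real.sqrt 2) ^ 2
      = 2 * a ^ 2 + 2 * Real.sqrt 2 * a * s * (c + t) + s ^ 2 * (c + t) ^ 2 := by
    field_simp
    linear_combination (-(2 * a * s * (c + t) * Real.sqrt 2 + s ^ 2 * (c + t) ^ 2)) * hs2
  constructor
  · intro γ γ'
    set x := Real.cos γ
    set A := Real.cos γ'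
    set B := Real.sin γ'
    have hx2 : x ^ 2 ≤ 1 := Real.cos_sq_le_one γ
    have hAB : A ^ 2 + B ^ 2 = 1 := by
      have := Real.sin_sq_add_cos_sq γ'; linarith
    have h1 : x * (A + B) ≤ Real.sqrt 2 := by
      nlinarith [sq_nonneg (x * (A + B) - Real.sqrt 2), sq_nonneg (A - B),
        sq_nonneg (A + B), hs2, hs2pos]
    have hpq : (c * A + t * B) ^ 2 + (c * B + t * A) ^ 2 ≤ (c + t) ^ 2 := by
      nlinarith [sq_nonneg (A - B), mul_nonneg hct hst]
    have hasct : 0 ≤ a * s * (c + t) := by positivity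
    rw [hR]
    nlinarith [mul_le_mul_of_nonneg_left h1 hasct, sq_nonneg s,
      mul_le_mul_of_nonneg_right hpq (sq_nonneg s), sq_nonneg a,
      mul_le_mul_of_nonneg_left hx2 (sq_nonneg a)]
  · have h12 : Real.sqrt 2 / 2 = 1 / Real.sqrt 2 := by
      rw [div_eq_div_iff (by norm_num) hs2pos.ne']; nlinarith [hs2]
    rw [Real.cos_zero, Real.cos_pi_div_four, Real.sin_pi_div_four, h12]
    rw [div_eq_mul_inv, div_eq_mul_inv]
    have hinv : Real.sqrt 2 * (Real.sqrt 2)⁻¹ = 1 := mul_inv_cancel₀ hs2pos.ne'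
    nlinarith [hinv, hs2, hs2pos, sq_nonneg ((Real.sqrt 2)⁻¹)]
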